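/- Every natural ℝ-bilinear first-order differential operator transforming a vector field X and a 1-form ψ on a smooth manifold into a 1-form is a linear combination, with real coefficients, of the two operators d(ψ(X)) and i_X dψ. -/

import Mathlib

open scoped BigOperators

noncomputable section

/-- Points of the model space `ℝ^m`. -/
abbrev Pt (m : ℕ) := Fin m → ℝ
/-- Vector fields (or 1-forms) on `ℝ^m`, given by their components. -/
abbrev VF (m : ℕ) := Pt m → Fin m → ℝ
/-- (0,2)-tensor fields (or (1,1)-tensor fields) on `ℝ^m`, given by components. -/
abbrev T02 (m : ℕ) := Pt m → Fin m → Fin m → ℝ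
/-- (0,3)- or (1,2)-tensor fields on `ℝ^m`, given by components. -/
abbrev T3 (m : ℕ) := Pt m → Fin m → Fin m → Fin m → ℝ

variable {m : ℕ}

/-- `i`-th partial derivative of a scalar function. -/
def pd (i : Fin m) (f : Pt m → ℝ) (x : Pt m) : ℝ :=
  fderiv ℝ f x (Pi.single i 1)

/-- Derivative of a function `f` along a vector field `X`. -/
def Xdot (X : VF m) (f : Pt m → ℝ) (x : Pt m) : ℝ :=
  ∑ k, X x k * pd k f x

/-- Lie bracket of vector fields, in components. -/
def lieB (X Y : VF m) : VF m := fun x i =>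
  ∑ k, (X x k * pd k (fun y => Y y i) x - Y x k * pd k (fun y => X y i) x)

/-- Evaluation `ψ(X)` of a 1-form on a vector field. -/
def ev1 (ψ X : VF m) (x : Pt m) : ℝ := ∑ i, ψ x i * X x i

/-- Exterior derivative of a function, as a 1-form. -/
def dF (f : Pt m → ℝ) : VF m := fun x i => pd i f x

/-- Exterior derivative of a 1-form, as a 2-form: `(dψ)_{ij} = ∂_i ψ_j - ∂_j ψ_i`. -/
def d2 (ψ : VF m) : T02 m := fun x i j =>
  pd i (fun y => ψ y j) x - pd j (fun y => ψ y i) x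

/-- Evaluation of a (0,2)-tensor field on two vector fields. -/
def ev2 (T : T02 m) (X Y : VF m) (x : Pt m) : ℝ :=
  ∑ i, ∑ j, T x i j * X x i * Y x j

/-- Lie derivative of a 1-form `ψ` along `X`, evaluated on `Y`:
`(L_X ψ)(Y) = X·(ψ(Y)) - ψ([X,Y])`. -/
def lie1 (X ψ Y : VF m) (x : Pt m) : ℝ :=
  Xdot X (ev1 ψ Y) x - ev1 ψ (lieB X Y) x

/-- Lie derivative of a (0,2)-tensor field `T` along `X`, evaluated on `Y, Z`:
`(L_X T)(Y,Z) = X·T(Y,Z) - T([X,Y],Z) - T(Y,[X,Z])`. -/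
def lie2 (X : VF m) (T : T02 m) (Y Z : VF m) (x : Pt m) : ℝ :=
  Xdot X (ev2 T Y Z) x - ev2 T (lieB X Y) Z x - ev2 T Y (lieB X Z) x

/-- Application of a (1,1)-tensor field to a vector field: `(φX)^i = φ^i_j X^j`. -/
def appT (φ : T02 m) (X : VF m) : VF m := fun x i => ∑ j, φ x i j * X x j

/-- `(ψ∘₁φ)(X,Y) = ψ(φX,Y)`, in components `(ψ∘₁φ)_{ij} = ψ_{aj} φ^a_i`. -/
def comp1 (ψ φ : T02 m) : T02 m := fun x i j => ∑ a, ψ x a j * φ x a i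

/-- `(ψ∘₂φ)(X,Y) = ψ(X,φY)`, in components `(ψ∘₂φ)_{ij} = ψ_{ia} φ^a_j`. -/
def comp2 (ψ φ : T02 m) : T02 m := fun x i j => ∑ a, ψ x i a * φ x a j

/-- Composition `ψ∘φ` of a 1-form with a (1,1)-tensor field:  `(ψ∘φ)_i = ψ_a φ^a_i`. -/
def compF (ψ : VF m) (φ : T02 m) : VF m := fun x i => ∑ a, ψ x a * φ x a i

/-- Exterior derivative of a 2-form `T`, as a 3-form:
`(dT)_{ijk} = ∂_i T_{jk} - ∂_j T_{ik} + ∂_k T_{ij}`. -/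
def d3 (T : T02 m) : T3 m := fun x i j k =>
  pd i (fun y => T y j k) x - pd j (fun y => T y i k) x + pd k (fun y => T y i j) x

/-- Evaluation of a (0,3)-tensor field on three vector fields. -/
def ev3 (U : T3 m) (X Y Z : VF m) (x : Pt m) : ℝ :=
  ∑ i, ∑ j, ∑ k, U x i j k * X x i * Y x j * Z x k

/-- Pointwise sum of vector fields. -/
def addV (X Y : VF m) : VF m := fun x i => X x i + Y x i

/-- Pointwise multiplication of a vector field by a function. -/
def smulV (f : Pt m → ℝ) (X : VF m) : VF m := fun x i => f x * X x i

/-- The coordinate expression of the candidate first-order bilinear operator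
`Φ_i = a₁·X^k ∂_k ψ_i + a₂·X^k ∂_i ψ_k + b₁·ψ_i ∂_k X^k + b₂·ψ_k ∂_i X^k`. -/
def PhiF (a₁ a₂ b₁ b₂ : ℝ) (X ψ : VF m) : VF m := fun x i =>
  a₁ * (∑ k, X x k * pd k (fun y => ψ y i) x)
  + a₂ * (∑ k, X x k * pd i (fun y => ψ y k) x)
  + b₁ * ψ x i * (∑ k, pd k (fun y => X y k) x)
  + b₂ * (∑ k, ψ x k * pd i (fun y => X y k) x)

/-- Pushforward of a vector field by a diffeomorphism of `ℝ^m`. -/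
def pfwdV (φ : Pt m ≃ Pt m) (X : VF m) : VF m := fun x =>
  fderiv ℝ (⇑φ) (φ.symm x) (X (φ.symm x))

/-- Pushforward of a 1-form by a diffeomorphism of `ℝ^m`:
`(φ_*ψ)_i(x) = ψ_j(φ⁻¹x) ∂_i(φ⁻¹)^j(x)`. -/
def pfwd1 (φ : Pt m ≃ Pt m) (ψ : VF m) : VF m := fun x i =>
  ∑ j, ψ (φ.symm x) j * fderiv ℝ (⇑φ.symm) x (Pi.single i 1) j

section AuxPD

variable {m : ℕ}

lemma pd_of_hasFDerivAt {f : Pt m → ℝ} {L : Pt m →L[ℝ] ℝ} {x : Pt m}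
    (h : HasFDerivAt f L x) (i : Fin m) : pd i f x = L (Pi.single i 1) := by
  rw [pd, h.fderiv]

lemma hasFDerivAt_coord (j : Fin m) (x : Pt m) :
    HasFDerivAt (fun y : Pt m => y j) (ContinuousLinearMap.proj j : Pt m →L[ℝ] ℝ) x :=
  hasFDerivAt_apply j x

lemma pd_coord (i j : Fin m) (x : Pt m) :
    pd i (fun y : Pt m => y j) x = if j = i then 1 else 0 := by
  rw [pd_of_hasFDerivAt (hasFDerivAt_coord j x)]
  simp [ContinuousLinearMap.proj_apply, Pi.single_apply]

lemma pd_const (i : Fin m) (c : ℝ) (x : Pt m) : pd i (fun _ => c) x = 0 := by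
  simp [pd, fderiv_const]

lemma pd_comp_coord {h : ℝ → ℝ} {h' : ℝ} (i j : Fin m) {x : Pt m}
    (hh : HasDerivAt h h' (x j)) :
    pd i (fun y : Pt m => h (y j)) x = h' * (if j = i then 1 else 0) := by
  have H : HasFDerivAt (fun y : Pt m => h (y j))
      (h' • (ContinuousLinearMap.proj j : Pt m →L[ℝ] ℝ)) x :=
    hh.comp_hasFDerivAt x (hasFDerivAt_coord j x)
  rw [pd_of_hasFDerivAt H]
  simp [Pi.single_apply]

lemma pd_mul {f g : Pt m → ℝ} {x : Pt m} (hf : DifferentiableAt ℝ f x)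
    (hg : DifferentiableAt ℝ g x) (i : Fin m) :
    pd i (fun y => f y * g y) x = f x * pd i g x + g x * pd i f x := by
  simp only [pd]
  rw [fderiv_fun_mul hf hg]
  simp

lemma pd_neg {f : Pt m → ℝ} {x : Pt m} (i : Fin m) :
    pd i (fun y => -(f y)) x = -pd i f x := by
  simp only [pd]
  rw [fderiv_fun_neg]
  simp

lemma pd_sum {f : Fin m → Pt m → ℝ} {x : Pt m} (hf : ∀ k, DifferentiableAt ℝ (f k) x)
    (i : Fin m) :
    pd i (fun y => ∑ k, f k y) x = ∑ k, pd i (f k) x := by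
  simp only [pd]
  rw [fderiv_fun_sum (fun k _ => hf k)]
  simp

lemma diff_coord (j : Fin m) (x : Pt m) : DifferentiableAt ℝ (fun y : Pt m => y j) x :=
  (hasFDerivAt_coord j x).differentiableAt

lemma diff_comp_coord {h : ℝ → ℝ} {h' : ℝ} (j : Fin m) {x : Pt m}
    (hh : HasDerivAt h h' (x j)) : DifferentiableAt ℝ (fun y : Pt m => h (y j)) x :=
  (hh.comp_hasFDerivAt x (hasFDerivAt_coord j x)).differentiableAt

lemma fderiv_pi_apply' {F : Pt m → Pt m} {x v : Pt m}
    (hd : ∀ j, DifferentiableAt ℝ (fun y => F y j) x) (k : Fin m) :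
    fderiv ℝ F x v k = fderiv ℝ (fun y => F y k) x v := by
  have h : HasFDerivAt F
      (ContinuousLinearMap.pi (fun j => fderiv ℝ (fun y => F y j) x)) x :=
    hasFDerivAt_pi.2 (fun j => (hd j).hasFDerivAt)
  rw [h.fderiv]
  rfl

lemma diff_apply_of_contDiff {X : VF m} (hX : ContDiff ℝ (⊤ : ℕ∞) X) (k : Fin m)
    (x : Pt m) : DifferentiableAt ℝ (fun y => X y k) x := by
  have := (hasFDerivAt_apply k (X x)).differentiableAt.comp x
    ((hX.differentiable (by simp)) x)
  exact this

lemma hasDerivAt_expNeg (t : ℝ) :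
    HasDerivAt (fun s : ℝ => Real.exp (-s)) (-Real.exp (-t)) t := by
  have := (Real.hasDerivAt_exp (-t)).comp t (hasDerivAt_neg t)
  simpa [Function.comp_def] using this

/-- The non-volume-preserving diffeomorphism `(x₀, x₁, …) ↦ (x₀ e^{x₁}, x₁, …)`. -/
def expShear (n : ℕ) : Pt (n + 2) ≃ Pt (n + 2) where
  toFun x := fun k => if k = 0 then x 0 * Real.exp (x 1) else x k
  invFun x := fun k => if k = 0 then x 0 * Real.exp (-(x 1)) else x k
  left_inv x := by
    have h10 : (1 : Fin (n + 2)) ≠ 0 := by simp [Fin.ext_iff]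
    funext k
    by_cases hk : k = 0
    · subst hk
      beta_reduce
      rw [if_pos rfl, if_pos rfl, if_neg h10]
      rw [mul_assoc, ← Real.exp_add, add_neg_cancel, Real.exp_zero, mul_one]
    · simp only [if_neg hk]
  right_inv x := by
    have h10 : (1 : Fin (n + 2)) ≠ 0 := by simp [Fin.ext_iff]
    funext k
    by_cases hk : k = 0
    · subst hk
      beta_reduce
      rw [if_pos rfl, if_pos rfl, if_neg h10]
      rw [mul_assoc, ← Real.exp_add, neg_add_cancel, Real.exp_zero, mul_one]
    · simp only [if_neg hk]

lemma expShear_apply (n : ℕ) (x : Pt (n + 2)) (k : Fin (n + 2)) :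
    expShear n x k = if k = 0 then x 0 * Real.exp (x 1) else x k := rfl

lemma expShear_symm_apply (n : ℕ) (x : Pt (n + 2)) (k : Fin (n + 2)) :
    (expShear n).symm x k = if k = 0 then x 0 * Real.exp (-(x 1)) else x k := rfl

lemma contDiff_expShear (n : ℕ) : ContDiff ℝ (⊤ : ℕ∞) ⇑(expShear n) := by
  apply contDiff_pi.2
  intro k
  by_cases hk : k = 0
  · subst hk
    have : (fun x : Pt (n + 2) => expShear n x 0)
        = fun x : Pt (n + 2) => x 0 * Real.exp (x 1) := by
      funext x; rw [expShear_apply, if_pos rfl]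
    rw [this]
    exact ((ContinuousLinearMap.proj (0 : Fin (n + 2)) :
        Pt (n + 2) →L[ℝ] ℝ).contDiff).mul
      (Real.contDiff_exp.comp (ContinuousLinearMap.proj (1 : Fin (n + 2)) :
        Pt (n + 2) →L[ℝ] ℝ).contDiff)
  · have : (fun x : Pt (n + 2) => expShear n x k) = fun x : Pt (n + 2) => x k := by
      funext x; rw [expShear_apply, if_neg hk]
    rw [this]
    exact (ContinuousLinearMap.proj k : Pt (n + 2) →L[ℝ] ℝ).contDiff

lemma contDiff_expShear_symm (n : ℕ) : ContDiff ℝ (⊤ : ℕ∞) ⇑(expShear n).symm := by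
  apply contDiff_pi.2
  intro k
  by_cases hk : k = 0
  · subst hk
    have : (fun x : Pt (n + 2) => (expShear n).symm x 0)
        = fun x : Pt (n + 2) => x 0 * Real.exp (-(x 1)) := by
      funext x; rw [expShear_symm_apply, if_pos rfl]
    rw [this]
    exact ((ContinuousLinearMap.proj (0 : Fin (n + 2)) :
        Pt (n + 2) →L[ℝ] ℝ).contDiff).mul
      (Real.contDiff_exp.comp
        ((ContinuousLinearMap.proj (1 : Fin (n + 2)) :
          Pt (n + 2) →L[ℝ] ℝ).contDiff.neg))
  · have : (fun x : Pt (n + 2) => (expShear n).symm x k) = fun x : Pt (n + 2) => x k := by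
      funext x; rw [expShear_symm_apply, if_neg hk]
    rw [this]
    exact (ContinuousLinearMap.proj k : Pt (n + 2) →L[ℝ] ℝ).contDiff

lemma diff_expShear_comp (n : ℕ) (j : Fin (n + 2)) (x : Pt (n + 2)) :
    DifferentiableAt ℝ (fun y => expShear n y j) x := by
  by_cases hj : j = 0
  · subst hj
    have : (fun y : Pt (n + 2) => expShear n y 0)
        = fun y : Pt (n + 2) => y 0 * Real.exp (y 1) := by
      funext y; rw [expShear_apply, if_pos rfl]
    rw [this]
    exact (diff_coord 0 x).mul (diff_comp_coord 1 (Real.hasDerivAt_exp (x 1)))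
  · have : (fun y : Pt (n + 2) => expShear n y j) = fun y : Pt (n + 2) => y j := by
      funext y; rw [expShear_apply, if_neg hj]
    rw [this]
    exact diff_coord j x

lemma diff_expShear_symm_comp (n : ℕ) (j : Fin (n + 2)) (x : Pt (n + 2)) :
    DifferentiableAt ℝ (fun y => (expShear n).symm y j) x := by
  by_cases hj : j = 0
  · subst hj
    have : (fun y : Pt (n + 2) => (expShear n).symm y 0)
        = fun y : Pt (n + 2) => y 0 * Real.exp (-(y 1)) := by
      funext y; rw [expShear_symm_apply, if_pos rfl]
    rw [this]
    exact (diff_coord 0 x).mul (diff_comp_coord 1 (hasDerivAt_expNeg (x 1)))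
  · have : (fun y : Pt (n + 2) => (expShear n).symm y j) = fun y : Pt (n + 2) => y j := by
      funext y; rw [expShear_symm_apply, if_neg hj]
    rw [this]
    exact diff_coord j x

end AuxPD

/-- Theorem 2.2: every natural ℝ-bilinear first-order operator transforming a
vector field `X` and a 1-form `ψ` into a 1-form (i.e. every operator of the
given coordinate form which is equivariant under all diffeomorphisms of `ℝ^m`)
is a linear combination of `d(ψ(X))` and `i_X dψ`. -/
theorem stmt4 (m : ℕ) (hm : 2 ≤ m) (a₁ a₂ b₁ b₂ : ℝ)
    (hnat : ∀ (φ : Pt m ≃ Pt m), ContDiff ℝ (⊤ : ℕ∞) (⇑φ) →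
      ContDiff ℝ (⊤ : ℕ∞) (⇑φ.symm) →
      ∀ X ψ : VF m, ContDiff ℝ (⊤ : ℕ∞) X → ContDiff ℝ (⊤ : ℕ∞) ψ →
        PhiF a₁ a₂ b₁ b₂ (pfwdV φ X) (pfwd1 φ ψ)
          = pfwd1 φ (PhiF a₁ a₂ b₁ b₂ X ψ)) :
    ∃ c₁ c₂ : ℝ, ∀ X ψ : VF m, ContDiff ℝ (⊤ : ℕ∞) X → ContDiff ℝ (⊤ : ℕ∞) ψ →
      ∀ x i, PhiF a₁ a₂ b₁ b₂ X ψ x i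
        = c₁ * dF (ev1 ψ X) x i + c₂ * (∑ k, X x k * d2 ψ x k i) := by
  obtain ⟨n, rfl⟩ : ∃ n, m = n + 2 := ⟨m - 2, by omega⟩
  have h10 : (1 : Fin (n + 2)) ≠ 0 := by simp [Fin.ext_iff]
  have h01 : (0 : Fin (n + 2)) ≠ 1 := fun h => h10 h.symm
  set φ := expShear n with hφdef
  set z : Pt (n + 2) := (fun _ => 0) with hzdef
  -- pointwise pd facts, as rewrite rules
  have P3 : ∀ (i : Fin (n + 2)) (x : Pt (n + 2)),
      pd i (fun y : Pt (n + 2) => Real.exp (y 1)) x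
        = Real.exp (x 1) * (if 1 = i then 1 else 0) :=
    fun i x => pd_comp_coord i 1 (Real.hasDerivAt_exp (x 1))
  have P4 : ∀ (i : Fin (n + 2)) (x : Pt (n + 2)),
      pd i (fun y : Pt (n + 2) => Real.exp (-(y 1))) x
        = -Real.exp (-(x 1)) * (if 1 = i then 1 else 0) :=
    fun i x => pd_comp_coord i 1 (hasDerivAt_expNeg (x 1))
  have P5 : ∀ (i : Fin (n + 2)) (x : Pt (n + 2)),
      pd i (fun y : Pt (n + 2) => y 0 * Real.exp (-(y 1))) x
        = x 0 * (-Real.exp (-(x 1)) * (if 1 = i then 1 else 0))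
          + Real.exp (-(x 1)) * (if 0 = i then 1 else 0) := by
    intro i x
    rw [pd_mul (diff_coord 0 x) (diff_comp_coord 1 (hasDerivAt_expNeg (x 1))) i,
      P4, pd_coord]
  have P6 : ∀ (i : Fin (n + 2)) (x : Pt (n + 2)),
      pd i (fun y : Pt (n + 2) => y 0 * Real.exp (y 1)) x
        = x 0 * (Real.exp (x 1) * (if 1 = i then 1 else 0))
          + Real.exp (x 1) * (if 0 = i then 1 else 0) := by
    intro i x
    rw [pd_mul (diff_coord 0 x) (diff_comp_coord 1 (Real.hasDerivAt_exp (x 1))) i,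
      P3, pd_coord]
  have P7 : ∀ (i : Fin (n + 2)) (x : Pt (n + 2)),
      pd i (fun y : Pt (n + 2) => -(y 0 * Real.exp (-(y 1)))) x
        = -(x 0 * (-Real.exp (-(x 1)) * (if 1 = i then 1 else 0))
          + Real.exp (-(x 1)) * (if 0 = i then 1 else 0)) := by
    intro i x
    rw [pd_neg, P5]
  have R1 : ∀ (i k : Fin (n + 2)) (x : Pt (n + 2)),
      pd k (fun y : Pt (n + 2) => if i = 0 then Real.exp (-(y 1))
          else if i = 1 then -(y 0 * Real.exp (-(y 1))) else 0) x
        = if i = 0 then -Real.exp (-(x 1)) * (if 1 = k then 1 else 0)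
          else if i = 1 then
            -(x 0 * (-Real.exp (-(x 1)) * (if 1 = k then 1 else 0))
              + Real.exp (-(x 1)) * (if 0 = k then 1 else 0))
          else 0 := by
    intro i k x
    by_cases hi : i = 0
    · simp only [hi, if_pos rfl]
      exact P4 k x
    · by_cases hi1 : i = 1
      · simp only [hi1, if_neg h10, if_pos rfl]
        exact P7 k x
      · simp only [if_neg hi, if_neg hi1]
        exact pd_const k 0 x
  have R2 : ∀ (j k : Fin (n + 2)) (x : Pt (n + 2)),
      pd k (fun y : Pt (n + 2) => if j = 0 then y 0 else if j = 1 then 1 else 0) x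
        = if j = 0 then (if 0 = k then 1 else 0) else 0 := by
    intro j k x
    by_cases hj : j = 0
    · simp only [hj, if_pos rfl]
      exact pd_coord k 0 x
    · simp only [if_neg hj]
      exact pd_const k _ x
  have R3 : ∀ (j k : Fin (n + 2)) (x : Pt (n + 2)),
      pd k (fun y : Pt (n + 2) => if j = 0 then Real.exp (y 1) else 0) x
        = if j = 0 then Real.exp (x 1) * (if 1 = k then 1 else 0) else 0 := by
    intro j k x
    by_cases hj : j = 0
    · simp only [hj, if_pos rfl]
      exact P3 k x
    · simp only [if_neg hj]
      exact pd_const k 0 x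
  -- the transformed fields
  have hsymm1 : ∀ x : Pt (n + 2), φ.symm x 1 = x 1 := by
    intro x; rw [expShear_symm_apply, if_neg h10]
  have hXt0 : pfwdV φ (fun _ => Pi.single (0 : Fin (n + 2)) (1 : ℝ))
      = fun x k => if k = 0 then Real.exp (x 1) else 0 := by
    funext x k
    show fderiv ℝ (⇑φ) (φ.symm x) (Pi.single 0 1) k = _
    rw [fderiv_pi_apply' (fun j => diff_expShear_comp n j _)]
    show pd 0 (fun y => φ y k) (φ.symm x) = _
    by_cases hk : k = 0
    · subst hk
      have e : (fun y : Pt (n + 2) => φ y 0) = fun y => y 0 * Real.exp (y 1) := by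
        funext y; rw [expShear_apply, if_pos rfl]
      rw [e, P6, hsymm1]
      simp [h10]
    · have e : (fun y : Pt (n + 2) => φ y k) = fun y => y k := by
        funext y; rw [expShear_apply, if_neg hk]
      rw [e, pd_coord, if_neg hk, if_neg hk]
  have hXt1 : pfwdV φ (fun _ => Pi.single (1 : Fin (n + 2)) (1 : ℝ))
      = fun x k => if k = 0 then x 0 else if k = 1 then 1 else 0 := by
    funext x k
    show fderiv ℝ (⇑φ) (φ.symm x) (Pi.single 1 1) k = _
    rw [fderiv_pi_apply' (fun j => diff_expShear_comp n j _)]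
    show pd 1 (fun y => φ y k) (φ.symm x) = _
    by_cases hk : k = 0
    · subst hk
      have e : (fun y : Pt (n + 2) => φ y 0) = fun y => y 0 * Real.exp (y 1) := by
        funext y; rw [expShear_apply, if_pos rfl]
      rw [e, P6, hsymm1]
      have e0 : φ.symm x 0 = x 0 * Real.exp (-(x 1)) := by
        rw [expShear_symm_apply, if_pos rfl]
      rw [e0, if_pos rfl, if_neg h01, if_pos rfl]
      rw [mul_zero, add_zero, mul_one, mul_assoc, ← Real.exp_add, neg_add_cancel,
        Real.exp_zero, mul_one]
    · have e : (fun y : Pt (n + 2) => φ y k) = fun y => y k := by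
        funext y; rw [expShear_apply, if_neg hk]
      rw [e, pd_coord, if_neg hk]
  have hPsit : pfwd1 φ (fun _ => Pi.single (0 : Fin (n + 2)) (1 : ℝ))
      = fun x i => if i = 0 then Real.exp (-(x 1))
          else if i = 1 then -(x 0 * Real.exp (-(x 1))) else 0 := by
    funext x i
    have hcomp : ∀ j, fderiv ℝ (⇑φ.symm) x (Pi.single i 1) j
        = pd i (fun y => φ.symm y j) x :=
      fun j => fderiv_pi_apply' (fun j' => diff_expShear_symm_comp n j' x) j
    simp only [pfwd1]
    simp only [hcomp, Pi.single_apply, ite_mul, one_mul, zero_mul,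
      Finset.sum_ite_eq', Finset.mem_univ, if_true]
    have e : (fun y : Pt (n + 2) => φ.symm y 0) = fun y => y 0 * Real.exp (-(y 1)) := by
      funext y; rw [expShear_symm_apply, if_pos rfl]
    rw [e, P5]
    by_cases hi : i = 0
    · subst hi
      simp [h10]
    · by_cases hi1 : i = 1
      · subst hi1
        simp [h01]
      · have hi0 : ¬((0 : Fin (n + 2)) = i) := fun h => hi h.symm
        have hi1' : ¬((1 : Fin (n + 2)) = i) := fun h => hi1 h.symm
        simp [hi, hi1, hi0, hi1']
  -- the operator kills constant fields
  have hPc : ∀ u v : Fin (n + 2) → ℝ,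
      PhiF a₁ a₂ b₁ b₂ (fun _ => u) (fun _ => v) = fun _ _ => 0 := by
    intro u v; funext x i
    simp [PhiF, pd_const]
  -- first equation
  have key1 := hnat φ (contDiff_expShear n) (contDiff_expShear_symm n)
    (fun _ => Pi.single (0 : Fin (n + 2)) (1 : ℝ))
    (fun _ => Pi.single (0 : Fin (n + 2)) (1 : ℝ)) contDiff_const contDiff_const
  rw [hXt0, hPsit, hPc] at key1
  have hz1 : z 1 = 0 := rfl
  have hz0 : z 0 = 0 := rfl
  have hss : ∀ i : Fin n, (Fin.succ (Fin.succ i) : Fin (n + 2)) ≠ 1 := by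
    intro i h
    have h' : (Fin.succ (Fin.succ i)).val = (1 : Fin (n + 2)).val := by rw [h]
    simp [Fin.val_succ] at h'
  have h1 := congrFun (congrFun key1 z) 1
  simp only [PhiF, pfwd1] at h1
  simp only [R1, R2, R3, pd_coord, pd_const] at h1
  simp [hz0, hz1, h10, h01, Fin.sum_univ_succ, Fin.succ_ne_zero,
    Fin.succ_zero_eq_one, hss] at h1
  simp only [P3, P4, P7, pd_coord, pd_const, hz0, hz1] at h1
  simp [h10, h01] at h1
  -- second equation
  have key2 := hnat φ (contDiff_expShear n) (contDiff_expShear_symm n)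
    (fun _ => Pi.single (1 : Fin (n + 2)) (1 : ℝ))
    (fun _ => Pi.single (0 : Fin (n + 2)) (1 : ℝ)) contDiff_const contDiff_const
  rw [hXt1, hPsit, hPc] at key2
  have h2 := congrFun (congrFun key2 z) 0
  simp only [PhiF, pfwd1] at h2
  simp only [R1, R2, R3, pd_coord, pd_const] at h2
  simp [hz0, hz1, h10, h01, Fin.sum_univ_succ, Fin.succ_ne_zero,
    Fin.succ_zero_eq_one, hss] at h2
  simp only [P3, P4, P7, pd_coord, pd_const, hz0, hz1] at h2
  simp [h10, h01] at h2
  have hb1 : b₁ = 0 := by linarith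
  have hb2 : b₂ = a₁ + a₂ := by linarith
  refine ⟨a₁ + a₂, a₁, ?_⟩
  intro X ψ hX hψ x i
  have dX : ∀ k, DifferentiableAt ℝ (fun y => X y k) x :=
    fun k => diff_apply_of_contDiff hX k x
  have dψ : ∀ k, DifferentiableAt ℝ (fun y => ψ y k) x :=
    fun k => diff_apply_of_contDiff hψ k x
  have hev : pd i (ev1 ψ X) x
      = ∑ k, (ψ x k * pd i (fun y => X y k) x + X x k * pd i (fun y => ψ y k) x) := by
    rw [show ev1 ψ X
        = fun y => ∑ k, (fun k (y : Pt (n + 2)) => ψ y k * X y k) k y from rfl]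
    rw [pd_sum (f := fun k (y : Pt (n + 2)) => ψ y k * X y k) (fun k => (dψ k).mul (dX k)) i]
    exact Finset.sum_congr rfl fun k _ => pd_mul (dψ k) (dX k) i
  have hsub : ∑ k, X x k * (pd k (fun y => ψ y i) x - pd i (fun y => ψ y k) x)
      = (∑ k, X x k * pd k (fun y => ψ y i) x)
        - ∑ k, X x k * pd i (fun y => ψ y k) x := by
    rw [← Finset.sum_sub_distrib]
    exact Finset.sum_congr rfl fun k _ => mul_sub _ _ _
  have hadd : ∑ k, (ψ x k * pd i (fun y => X y k) x + X x k * pd i (fun y => ψ y k) x)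
      = (∑ k, ψ x k * pd i (fun y => X y k) x)
        + ∑ k, X x k * pd i (fun y => ψ y k) x :=
    Finset.sum_add_distrib
  simp only [PhiF, dF, d2, hev, hadd, hb1, hb2, hsub]
  ring
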